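/- Let G be a real symmetric 4×4 matrix in emission form with det G < 0, and let K = G⁻¹. Then for every triple of distinct indices A, B, C, the 3×3 principal submatrix of K on rows and columns {A, B, C} is negative semidefinite and has determinant zero (it has rank 2). (Geometrically: each 3-space spanned by a triad of natural vectors of emission coordinates is null.) -/

import Mathlib

/-- A real matrix is negative semidefinite if it is symmetric and the associated
quadratic form is nonpositive. -/
def Matrix.NegSemidefR {n : ℕ} (M : Matrix (Fin n) (Fin n) ℝ) : Prop :=
  M.IsSymm ∧ ∀ x : Fin n → ℝ, dotProduct x (M.mulVec x) ≤ 0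

open Matrix Module

private lemma quadAux (n00 n01 n02 n11 n12 n22 v0 v1 v2 x0 x1 x2 : ℝ)
    (hv2 : 0 < v2) (h0 : 0 < n00) (hd : 0 < n00*n11 - n01^2)
    (k0 : n00*v0 + n01*v1 + n02*v2 = 0)
    (k1 : n01*v0 + n11*v1 + n12*v2 = 0)
    (k2 : n02*v0 + n12*v1 + n22*v2 = 0) :
    0 ≤ n00*x0^2 + n11*x1^2 + n22*x2^2 + 2*n01*x0*x1 + 2*n02*x0*x2 + 2*n12*x1*x2 := by
  have hid : (n00*x0^2 + n11*x1^2 + n22*x2^2 + 2*n01*x0*x1 + 2*n02*x0*x2 + 2*n12*x1*x2) * v2^2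
      = n00*(x0*v2 - x2*v0)^2 + 2*n01*(x0*v2 - x2*v0)*(x1*v2 - x2*v1)
        + n11*(x1*v2 - x2*v1)^2 := by
    linear_combination (x2*(2*x0*v2 - v0*x2))*k0 + (x2*(2*x1*v2 - v1*x2))*k1 + (x2^2*v2)*k2
  have h1 : 0 ≤ n00*(x0*v2 - x2*v0)^2 + 2*n01*(x0*v2 - x2*v0)*(x1*v2 - x2*v1)
      + n11*(x1*v2 - x2*v1)^2 := by
    nlinarith [sq_nonneg (n00*(x0*v2 - x2*v0) + n01*(x1*v2 - x2*v1)),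
      sq_nonneg (x1*v2 - x2*v1)]
  nlinarith [mul_pos hv2 hv2]

private lemma canonical (G : Matrix (Fin 4) (Fin 4) ℝ)
    (hsymm : G.IsSymm) (hdiag : ∀ i, G i i = 0)
    (hpos : ∀ i j, i ≠ j → 0 < G i j) (hdet : G.det < 0) :
      (G⁻¹.submatrix ![0, 1, 2] ![0, 1, 2]).NegSemidefR
      ∧ (G⁻¹.submatrix ![0, 1, 2] ![0, 1, 2]).det = 0
      ∧ (G⁻¹.submatrix ![0, 1, 2] ![0, 1, 2]).rank = 2 := by
  have hdet0 : G.det ≠ 0 := ne_of_lt hdet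
  have h00 : Matrix.adjugate G 0 0 = 2*G 1 2*G 1 3*G 2 3 := by
    rw [Matrix.adjugate_fin_succ_eq_det_submatrix, Matrix.det_fin_three]
    simp only [Matrix.submatrix_apply,
    show ((0:Fin 4).succAbove 0) = 1 from rfl, show ((0:Fin 4).succAbove 1) = 2 from rfl,
    show ((0:Fin 4).succAbove 2) = 3 from rfl,
    show ((1:Fin 4).succAbove 0) = 0 from rfl, show ((1:Fin 4).succAbove 1) = 2 from rfl,
    show ((1:Fin 4).succAbove 2) = 3 from rfl,
    show ((2:Fin 4).succAbove 0) = 0 from rfl, show ((2:Fin 4).succAbove 1) = 1 from rfl,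
    show ((2:Fin 4).succAbove 2) = 3 from rfl,
    show ((3:Fin 4).succAbove 0) = 0 from rfl, show ((3:Fin 4).succAbove 1) = 1 from rfl,
    show ((3:Fin 4).succAbove 2) = 2 from rfl,
    show (Fin.succ 0 : Fin 4) = 1 from rfl, show (Fin.succ 1 : Fin 4) = 2 from rfl,
    show (Fin.succ 2 : Fin 4) = 3 from rfl,
    show (((0:Fin 4)):ℕ) = 0 from rfl, show (((1:Fin 4)):ℕ) = 1 from rfl,
    show (((2:Fin 4)):ℕ) = 2 from rfl, show (((3:Fin 4)):ℕ) = 3 from rfl,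
    hdiag, hsymm.apply 0 1, hsymm.apply 0 2, hsymm.apply 0 3, hsymm.apply 1 2,
    hsymm.apply 1 3, hsymm.apply 2 3]
    norm_num
    ring
  have h01 : Matrix.adjugate G 0 1 = G 0 1*G 2 3^2 - G 0 3*G 1 2*G 2 3 - G 0 2*G 1 3*G 2 3 := by
    rw [Matrix.adjugate_fin_succ_eq_det_submatrix, Matrix.det_fin_three]
    simp only [Matrix.submatrix_apply,
    show ((0:Fin 4).succAbove 0) = 1 from rfl, show ((0:Fin 4).succAbove 1) = 2 from rfl,
    show ((0:Fin 4).succAbove 2) = 3 from rfl,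
    show ((1:Fin 4).succAbove 0) = 0 from rfl, show ((1:Fin 4).succAbove 1) = 2 from rfl,
    show ((1:Fin 4).succAbove 2) = 3 from rfl,
    show ((2:Fin 4).succAbove 0) = 0 from rfl, show ((2:Fin 4).succAbove 1) = 1 from rfl,
    show ((2:Fin 4).succAbove 2) = 3 from rfl,
    show ((3:Fin 4).succAbove 0) = 0 from rfl, show ((3:Fin 4).succAbove 1) = 1 from rfl,
    show ((3:Fin 4).succAbove 2) = 2 from rfl,
    show (Fin.succ 0 : Fin 4) = 1 from rfl, show (Fin.succ 1 : Fin 4) = 2 from rfl,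
    show (Fin.succ 2 : Fin 4) = 3 from rfl,
    show (((0:Fin 4)):ℕ) = 0 from rfl, show (((1:Fin 4)):ℕ) = 1 from rfl,
    show (((2:Fin 4)):ℕ) = 2 from rfl, show (((3:Fin 4)):ℕ) = 3 from rfl,
    hdiag, hsymm.apply 0 1, hsymm.apply 0 2, hsymm.apply 0 3, hsymm.apply 1 2,
    hsymm.apply 1 3, hsymm.apply 2 3]
    norm_num
    ring
  have h10 : Matrix.adjugate G 1 0 = G 0 1*G 2 3^2 - G 0 3*G 1 2*G 2 3 - G 0 2*G 1 3*G 2 3 := by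
    rw [Matrix.adjugate_fin_succ_eq_det_submatrix, Matrix.det_fin_three]
    simp only [Matrix.submatrix_apply,
    show ((0:Fin 4).succAbove 0) = 1 from rfl, show ((0:Fin 4).succAbove 1) = 2 from rfl,
    show ((0:Fin 4).succAbove 2) = 3 from rfl,
    show ((1:Fin 4).succAbove 0) = 0 from rfl, show ((1:Fin 4).succAbove 1) = 2 from rfl,
    show ((1:Fin 4).succAbove 2) = 3 from rfl,
    show ((2:Fin 4).succAbove 0) = 0 from rfl, show ((2:Fin 4).succAbove 1) = 1 from rfl,
    show ((2:Fin 4).succAbove 2) = 3 from rfl,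
    show ((3:Fin 4).succAbove 0) = 0 from rfl, show ((3:Fin 4).succAbove 1) = 1 from rfl,
    show ((3:Fin 4).succAbove 2) = 2 from rfl,
    show (Fin.succ 0 : Fin 4) = 1 from rfl, show (Fin.succ 1 : Fin 4) = 2 from rfl,
    show (Fin.succ 2 : Fin 4) = 3 from rfl,
    show (((0:Fin 4)):ℕ) = 0 from rfl, show (((1:Fin 4)):ℕ) = 1 from rfl,
    show (((2:Fin 4)):ℕ) = 2 from rfl, show (((3:Fin 4)):ℕ) = 3 from rfl,
    hdiag, hsymm.apply 0 1, hsymm.apply 0 2, hsymm.apply 0 3, hsymm.apply 1 2,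
    hsymm.apply 1 3, hsymm.apply 2 3]
    norm_num
    ring
  have h02 : Matrix.adjugate G 0 2 = G 0 2*G 1 3^2 - G 0 3*G 1 2*G 1 3 - G 0 1*G 1 3*G 2 3 := by
    rw [Matrix.adjugate_fin_succ_eq_det_submatrix, Matrix.det_fin_three]
    simp only [Matrix.submatrix_apply,
    show ((0:Fin 4).succAbove 0) = 1 from rfl, show ((0:Fin 4).succAbove 1) = 2 from rfl,
    show ((0:Fin 4).succAbove 2) = 3 from rfl,
    show ((1:Fin 4).succAbove 0) = 0 from rfl, show ((1:Fin 4).succAbove 1) = 2 from rfl,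
    show ((1:Fin 4).succAbove 2) = 3 from rfl,
    show ((2:Fin 4).succAbove 0) = 0 from rfl, show ((2:Fin 4).succAbove 1) = 1 from rfl,
    show ((2:Fin 4).succAbove 2) = 3 from rfl,
    show ((3:Fin 4).succAbove 0) = 0 from rfl, show ((3:Fin 4).succAbove 1) = 1 from rfl,
    show ((3:Fin 4).succAbove 2) = 2 from rfl,
    show (Fin.succ 0 : Fin 4) = 1 from rfl, show (Fin.succ 1 : Fin 4) = 2 from rfl,
    show (Fin.succ 2 : Fin 4) = 3 from rfl,
    show (((0:Fin 4)):ℕ) = 0 from rfl, show (((1:Fin 4)):ℕ) = 1 from rfl,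
    show (((2:Fin 4)):ℕ) = 2 from rfl, show (((3:Fin 4)):ℕ) = 3 from rfl,
    hdiag, hsymm.apply 0 1, hsymm.apply 0 2, hsymm.apply 0 3, hsymm.apply 1 2,
    hsymm.apply 1 3, hsymm.apply 2 3]
    norm_num
    ring
  have h20 : Matrix.adjugate G 2 0 = G 0 2*G 1 3^2 - G 0 3*G 1 2*G 1 3 - G 0 1*G 1 3*G 2 3 := by
    rw [Matrix.adjugate_fin_succ_eq_det_submatrix, Matrix.det_fin_three]
    simp only [Matrix.submatrix_apply,
    show ((0:Fin 4).succAbove 0) = 1 from rfl, show ((0:Fin 4).succAbove 1) = 2 from rfl,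
    show ((0:Fin 4).succAbove 2) = 3 from rfl,
    show ((1:Fin 4).succAbove 0) = 0 from rfl, show ((1:Fin 4).succAbove 1) = 2 from rfl,
    show ((1:Fin 4).succAbove 2) = 3 from rfl,
    show ((2:Fin 4).succAbove 0) = 0 from rfl, show ((2:Fin 4).succAbove 1) = 1 from rfl,
    show ((2:Fin 4).succAbove 2) = 3 from rfl,
    show ((3:Fin 4).succAbove 0) = 0 from rfl, show ((3:Fin 4).succAbove 1) = 1 from rfl,
    show ((3:Fin 4).succAbove 2) = 2 from rfl,
    show (Fin.succ 0 : Fin 4) = 1 from rfl, show (Fin.succ 1 : Fin 4) = 2 from rfl,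
    show (Fin.succ 2 : Fin 4) = 3 from rfl,
    show (((0:Fin 4)):ℕ) = 0 from rfl, show (((1:Fin 4)):ℕ) = 1 from rfl,
    show (((2:Fin 4)):ℕ) = 2 from rfl, show (((3:Fin 4)):ℕ) = 3 from rfl,
    hdiag, hsymm.apply 0 1, hsymm.apply 0 2, hsymm.apply 0 3, hsymm.apply 1 2,
    hsymm.apply 1 3, hsymm.apply 2 3]
    norm_num
    ring
  have h11 : Matrix.adjugate G 1 1 = 2*G 0 2*G 0 3*G 2 3 := by
    rw [Matrix.adjugate_fin_succ_eq_det_submatrix, Matrix.det_fin_three]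
    simp only [Matrix.submatrix_apply,
    show ((0:Fin 4).succAbove 0) = 1 from rfl, show ((0:Fin 4).succAbove 1) = 2 from rfl,
    show ((0:Fin 4).succAbove 2) = 3 from rfl,
    show ((1:Fin 4).succAbove 0) = 0 from rfl, show ((1:Fin 4).succAbove 1) = 2 from rfl,
    show ((1:Fin 4).succAbove 2) = 3 from rfl,
    show ((2:Fin 4).succAbove 0) = 0 from rfl, show ((2:Fin 4).succAbove 1) = 1 from rfl,
    show ((2:Fin 4).succAbove 2) = 3 from rfl,
    show ((3:Fin 4).succAbove 0) = 0 from rfl, show ((3:Fin 4).succAbove 1) = 1 from rfl,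
    show ((3:Fin 4).succAbove 2) = 2 from rfl,
    show (Fin.succ 0 : Fin 4) = 1 from rfl, show (Fin.succ 1 : Fin 4) = 2 from rfl,
    show (Fin.succ 2 : Fin 4) = 3 from rfl,
    show (((0:Fin 4)):ℕ) = 0 from rfl, show (((1:Fin 4)):ℕ) = 1 from rfl,
    show (((2:Fin 4)):ℕ) = 2 from rfl, show (((3:Fin 4)):ℕ) = 3 from rfl,
    hdiag, hsymm.apply 0 1, hsymm.apply 0 2, hsymm.apply 0 3, hsymm.apply 1 2,
    hsymm.apply 1 3, hsymm.apply 2 3]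
    norm_num
    ring
  have h12 : Matrix.adjugate G 1 2 = G 0 3^2*G 1 2 - G 0 2*G 0 3*G 1 3 - G 0 1*G 0 3*G 2 3 := by
    rw [Matrix.adjugate_fin_succ_eq_det_submatrix, Matrix.det_fin_three]
    simp only [Matrix.submatrix_apply,
    show ((0:Fin 4).succAbove 0) = 1 from rfl, show ((0:Fin 4).succAbove 1) = 2 from rfl,
    show ((0:Fin 4).succAbove 2) = 3 from rfl,
    show ((1:Fin 4).succAbove 0) = 0 from rfl, show ((1:Fin 4).succAbove 1) = 2 from rfl,
    show ((1:Fin 4).succAbove 2) = 3 from rfl,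
    show ((2:Fin 4).succAbove 0) = 0 from rfl, show ((2:Fin 4).succAbove 1) = 1 from rfl,
    show ((2:Fin 4).succAbove 2) = 3 from rfl,
    show ((3:Fin 4).succAbove 0) = 0 from rfl, show ((3:Fin 4).succAbove 1) = 1 from rfl,
    show ((3:Fin 4).succAbove 2) = 2 from rfl,
    show (Fin.succ 0 : Fin 4) = 1 from rfl, show (Fin.succ 1 : Fin 4) = 2 from rfl,
    show (Fin.succ 2 : Fin 4) = 3 from rfl,
    show (((0:Fin 4)):ℕ) = 0 from rfl, show (((1:Fin 4)):ℕ) = 1 from rfl,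
    show (((2:Fin 4)):ℕ) = 2 from rfl, show (((3:Fin 4)):ℕ) = 3 from rfl,
    hdiag, hsymm.apply 0 1, hsymm.apply 0 2, hsymm.apply 0 3, hsymm.apply 1 2,
    hsymm.apply 1 3, hsymm.apply 2 3]
    norm_num
    ring
  have h21 : Matrix.adjugate G 2 1 = G 0 3^2*G 1 2 - G 0 2*G 0 3*G 1 3 - G 0 1*G 0 3*G 2 3 := by
    rw [Matrix.adjugate_fin_succ_eq_det_submatrix, Matrix.det_fin_three]
    simp only [Matrix.submatrix_apply,
    show ((0:Fin 4).succAbove 0) = 1 from rfl, show ((0:Fin 4).succAbove 1) = 2 from rfl,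
    show ((0:Fin 4).succAbove 2) = 3 from rfl,
    show ((1:Fin 4).succAbove 0) = 0 from rfl, show ((1:Fin 4).succAbove 1) = 2 from rfl,
    show ((1:Fin 4).succAbove 2) = 3 from rfl,
    show ((2:Fin 4).succAbove 0) = 0 from rfl, show ((2:Fin 4).succAbove 1) = 1 from rfl,
    show ((2:Fin 4).succAbove 2) = 3 from rfl,
    show ((3:Fin 4).succAbove 0) = 0 from rfl, show ((3:Fin 4).succAbove 1) = 1 from rfl,
    show ((3:Fin 4).succAbove 2) = 2 from rfl,
    show (Fin.succ 0 : Fin 4) = 1 from rfl, show (Fin.succ 1 : Fin 4) = 2 from rfl,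
    show (Fin.succ 2 : Fin 4) = 3 from rfl,
    show (((0:Fin 4)):ℕ) = 0 from rfl, show (((1:Fin 4)):ℕ) = 1 from rfl,
    show (((2:Fin 4)):ℕ) = 2 from rfl, show (((3:Fin 4)):ℕ) = 3 from rfl,
    hdiag, hsymm.apply 0 1, hsymm.apply 0 2, hsymm.apply 0 3, hsymm.apply 1 2,
    hsymm.apply 1 3, hsymm.apply 2 3]
    norm_num
    ring
  have h22 : Matrix.adjugate G 2 2 = 2*G 0 1*G 0 3*G 1 3 := by
    rw [Matrix.adjugate_fin_succ_eq_det_submatrix, Matrix.det_fin_three]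
    simp only [Matrix.submatrix_apply,
    show ((0:Fin 4).succAbove 0) = 1 from rfl, show ((0:Fin 4).succAbove 1) = 2 from rfl,
    show ((0:Fin 4).succAbove 2) = 3 from rfl,
    show ((1:Fin 4).succAbove 0) = 0 from rfl, show ((1:Fin 4).succAbove 1) = 2 from rfl,
    show ((1:Fin 4).succAbove 2) = 3 from rfl,
    show ((2:Fin 4).succAbove 0) = 0 from rfl, show ((2:Fin 4).succAbove 1) = 1 from rfl,
    show ((2:Fin 4).succAbove 2) = 3 from rfl,
    show ((3:Fin 4).succAbove 0) = 0 from rfl, show ((3:Fin 4).succAbove 1) = 1 from rfl,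
    show ((3:Fin 4).succAbove 2) = 2 from rfl,
    show (Fin.succ 0 : Fin 4) = 1 from rfl, show (Fin.succ 1 : Fin 4) = 2 from rfl,
    show (Fin.succ 2 : Fin 4) = 3 from rfl,
    show (((0:Fin 4)):ℕ) = 0 from rfl, show (((1:Fin 4)):ℕ) = 1 from rfl,
    show (((2:Fin 4)):ℕ) = 2 from rfl, show (((3:Fin 4)):ℕ) = 3 from rfl,
    hdiag, hsymm.apply 0 1, hsymm.apply 0 2, hsymm.apply 0 3, hsymm.apply 1 2,
    hsymm.apply 1 3, hsymm.apply 2 3]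
    norm_num
    ring

  have hdet4 : G.det = G 0 3^2*G 1 2^2 - 2*G 0 2*G 0 3*G 1 2*G 1 3 + G 0 2^2*G 1 3^2 - 2*G 0 1*G 0 3*G 1 2*G 2 3 - 2*G 0 1*G 0 2*G 1 3*G 2 3 + G 0 1^2*G 2 3^2 := by
    rw [Matrix.det_succ_row_zero]
    simp only [Fin.sum_univ_four, Matrix.det_fin_three, Matrix.submatrix_apply,
    show ((0:Fin 4).succAbove 0) = 1 from rfl, show ((0:Fin 4).succAbove 1) = 2 from rfl,
    show ((0:Fin 4).succAbove 2) = 3 from rfl,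
    show ((1:Fin 4).succAbove 0) = 0 from rfl, show ((1:Fin 4).succAbove 1) = 2 from rfl,
    show ((1:Fin 4).succAbove 2) = 3 from rfl,
    show ((2:Fin 4).succAbove 0) = 0 from rfl, show ((2:Fin 4).succAbove 1) = 1 from rfl,
    show ((2:Fin 4).succAbove 2) = 3 from rfl,
    show ((3:Fin 4).succAbove 0) = 0 from rfl, show ((3:Fin 4).succAbove 1) = 1 from rfl,
    show ((3:Fin 4).succAbove 2) = 2 from rfl,
    show (Fin.succ 0 : Fin 4) = 1 from rfl, show (Fin.succ 1 : Fin 4) = 2 from rfl,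
    show (Fin.succ 2 : Fin 4) = 3 from rfl,
    show (((0:Fin 4)):ℕ) = 0 from rfl, show (((1:Fin 4)):ℕ) = 1 from rfl,
    show (((2:Fin 4)):ℕ) = 2 from rfl, show (((3:Fin 4)):ℕ) = 3 from rfl,
    hdiag, hsymm.apply 0 1, hsymm.apply 0 2, hsymm.apply 0 3, hsymm.apply 1 2,
    hsymm.apply 1 3, hsymm.apply 2 3]
    norm_num
    ring
  have hinv : ∀ i j, G⁻¹ i j = (G.det)⁻¹ * Matrix.adjugate G i j := by
    intro i j
    rw [Matrix.inv_def]
    simp [Ring.inverse_eq_inv]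
  set M := G⁻¹.submatrix ![(0:Fin 4), 1, 2] ![(0:Fin 4), 1, 2] with hMdef
  have hm : ∀ i j : Fin 3,
      M i j = (G.det)⁻¹ * Matrix.adjugate G (![(0:Fin 4),1,2] i) (![(0:Fin 4),1,2] j) := by
    intro i j
    rw [hMdef, Matrix.submatrix_apply, hinv]
  have hm00 : M 0 0 = (G.det)⁻¹ * (2*G 1 2*G 1 3*G 2 3) := by rw [hm 0 0]; norm_num [h00]
  have hm01 : M 0 1 = (G.det)⁻¹ * (G 0 1*G 2 3^2 - G 0 3*G 1 2*G 2 3 - G 0 2*G 1 3*G 2 3) := by rw [hm 0 1]; norm_num [h01]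
  have hm10 : M 1 0 = (G.det)⁻¹ * (G 0 1*G 2 3^2 - G 0 3*G 1 2*G 2 3 - G 0 2*G 1 3*G 2 3) := by rw [hm 1 0]; norm_num [h10]
  have hm02 : M 0 2 = (G.det)⁻¹ * (G 0 2*G 1 3^2 - G 0 3*G 1 2*G 1 3 - G 0 1*G 1 3*G 2 3) := by rw [hm 0 2]; norm_num [h02, show (![(0:Fin 4),1,2] : Fin 3 → Fin 4) 2 = 2 from rfl]
  have hm20 : M 2 0 = (G.det)⁻¹ * (G 0 2*G 1 3^2 - G 0 3*G 1 2*G 1 3 - G 0 1*G 1 3*G 2 3) := by rw [hm 2 0]; norm_num [h20, show (![(0:Fin 4),1,2] : Fin 3 → Fin 4) 2 = 2 from rfl]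
  have hm11 : M 1 1 = (G.det)⁻¹ * (2*G 0 2*G 0 3*G 2 3) := by rw [hm 1 1]; norm_num [h11]
  have hm12 : M 1 2 = (G.det)⁻¹ * (G 0 3^2*G 1 2 - G 0 2*G 0 3*G 1 3 - G 0 1*G 0 3*G 2 3) := by rw [hm 1 2]; norm_num [h12, show (![(0:Fin 4),1,2] : Fin 3 → Fin 4) 2 = 2 from rfl]
  have hm21 : M 2 1 = (G.det)⁻¹ * (G 0 3^2*G 1 2 - G 0 2*G 0 3*G 1 3 - G 0 1*G 0 3*G 2 3) := by rw [hm 2 1]; norm_num [h21, show (![(0:Fin 4),1,2] : Fin 3 → Fin 4) 2 = 2 from rfl]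
  have hm22 : M 2 2 = (G.det)⁻¹ * (2*G 0 1*G 0 3*G 1 3) := by rw [hm 2 2]; norm_num [h22, show (![(0:Fin 4),1,2] : Fin 3 → Fin 4) 2 = 2 from rfl]
  have hf : (0:ℝ) < G 2 3 := hpos 2 3 (by decide)
  have hdpos : 0 < (2*G 1 2*G 1 3*G 2 3) := by
    have h1 := hpos 1 2 (by decide)
    have h2 := hpos 1 3 (by decide)
    positivity
  have hdisc : 0 < (2*G 1 2*G 1 3*G 2 3)*(2*G 0 2*G 0 3*G 2 3) - (G 0 1*G 2 3^2 - G 0 3*G 1 2*G 2 3 - G 0 2*G 1 3*G 2 3)^2 := by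
    have hkey : (2*G 1 2*G 1 3*G 2 3)*(2*G 0 2*G 0 3*G 2 3) - (G 0 1*G 2 3^2 - G 0 3*G 1 2*G 2 3 - G 0 2*G 1 3*G 2 3)^2 = -G.det * (G 2 3)^2 := by
      rw [hdet4]; ring
    rw [hkey]
    exact mul_pos (neg_pos.2 hdet) (pow_pos hf 2)
  have hKsymm : (G⁻¹).IsSymm := by
    rw [Matrix.IsSymm, Matrix.transpose_nonsing_inv, hsymm.eq]
  have hMsymm : M.IsSymm := hKsymm.submatrix _
  have hk0 : (2*G 1 2*G 1 3*G 2 3)*(G 0 3) + (G 0 1*G 2 3^2 - G 0 3*G 1 2*G 2 3 - G 0 2*G 1 3*G 2 3)*(G 1 3) + (G 0 2*G 1 3^2 - G 0 3*G 1 2*G 1 3 - G 0 1*G 1 3*G 2 3)*(G 2 3) = 0 := by ring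
  have hk1 : (G 0 1*G 2 3^2 - G 0 3*G 1 2*G 2 3 - G 0 2*G 1 3*G 2 3)*(G 0 3) + (2*G 0 2*G 0 3*G 2 3)*(G 1 3) + (G 0 3^2*G 1 2 - G 0 2*G 0 3*G 1 3 - G 0 1*G 0 3*G 2 3)*(G 2 3) = 0 := by ring
  have hk2 : (G 0 2*G 1 3^2 - G 0 3*G 1 2*G 1 3 - G 0 1*G 1 3*G 2 3)*(G 0 3) + (G 0 3^2*G 1 2 - G 0 2*G 0 3*G 1 3 - G 0 1*G 0 3*G 2 3)*(G 1 3) + (2*G 0 1*G 0 3*G 1 3)*(G 2 3) = 0 := by ring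
  -- negative semidefiniteness
  have hNSD : M.NegSemidefR := by
    refine ⟨hMsymm, fun x => ?_⟩
    have hexp : dotProduct x (M.mulVec x)
        = (G.det)⁻¹ * ((2*G 1 2*G 1 3*G 2 3)*(x 0)^2 + (2*G 0 2*G 0 3*G 2 3)*(x 1)^2 + (2*G 0 1*G 0 3*G 1 3)*(x 2)^2
          + 2*(G 0 1*G 2 3^2 - G 0 3*G 1 2*G 2 3 - G 0 2*G 1 3*G 2 3)*(x 0)*(x 1) + 2*(G 0 2*G 1 3^2 - G 0 3*G 1 2*G 1 3 - G 0 1*G 1 3*G 2 3)*(x 0)*(x 2) + 2*(G 0 3^2*G 1 2 - G 0 2*G 0 3*G 1 3 - G 0 1*G 0 3*G 2 3)*(x 1)*(x 2)) := by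
      simp only [dotProduct, Matrix.mulVec, Fin.sum_univ_three,
        hm00, hm01, hm02, hm10, hm11, hm12, hm20, hm21, hm22]
      ring
    rw [hexp]
    have hS := quadAux (2*G 1 2*G 1 3*G 2 3) (G 0 1*G 2 3^2 - G 0 3*G 1 2*G 2 3 - G 0 2*G 1 3*G 2 3) (G 0 2*G 1 3^2 - G 0 3*G 1 2*G 1 3 - G 0 1*G 1 3*G 2 3) (2*G 0 2*G 0 3*G 2 3) (G 0 3^2*G 1 2 - G 0 2*G 0 3*G 1 3 - G 0 1*G 0 3*G 2 3) (2*G 0 1*G 0 3*G 1 3)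
      (G 0 3) (G 1 3) (G 2 3) (x 0) (x 1) (x 2) hf hdpos hdisc hk0 hk1 hk2
    have hinvle : (G.det)⁻¹ ≤ 0 := inv_nonpos.mpr hdet.le
    exact mul_nonpos_of_nonpos_of_nonneg hinvle hS
  refine ⟨hNSD, ?_, ?_⟩
  · rw [Matrix.det_fin_three, hm00, hm01, hm02, hm10, hm11, hm12, hm20, hm21, hm22]
    ring
  · -- rank = 2
    have hkerv : M.mulVec ![G 0 3, G 1 3, G 2 3] = 0 := by
      funext i
      fin_cases i <;>
        · simp only [Matrix.mulVec, dotProduct, Fin.sum_univ_three, Pi.zero_apply,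
            Matrix.cons_val_zero, Matrix.cons_val_one, Matrix.head_cons,
            show (![G 0 3, G 1 3, G 2 3] : Fin 3 → ℝ) 2 = G 2 3 from rfl,
            show ((⟨0, by norm_num⟩ : Fin 3)) = 0 from rfl,
        show ((⟨1, by norm_num⟩ : Fin 3)) = 1 from rfl,
        show ((⟨2, by norm_num⟩ : Fin 3)) = 2 from rfl,
            hm00, hm01, hm02, hm10, hm11, hm12, hm20, hm21, hm22]
          ring
    have hvne : (![G 0 3, G 1 3, G 2 3] : Fin 3 → ℝ) ≠ 0 := by
      intro h
      have h2 := congrFun h 2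
      simp only [show (![G 0 3, G 1 3, G 2 3] : Fin 3 → ℝ) 2 = G 2 3 from rfl, Pi.zero_apply] at h2
      exact absurd h2 (ne_of_gt hf)
    have hrank_le : M.rank ≤ 2 := by
      have hrn := LinearMap.finrank_range_add_finrank_ker M.mulVecLin
      have hdim : finrank ℝ (Fin 3 → ℝ) = 3 := by simp
      have hvmem : (![G 0 3, G 1 3, G 2 3] : Fin 3 → ℝ) ∈ LinearMap.ker M.mulVecLin := by
        simpa [Matrix.mulVecLin_apply] using hkerv
      have hkerne : LinearMap.ker M.mulVecLin ≠ ⊥ := by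
        intro hbot
        rw [hbot, Submodule.mem_bot] at hvmem
        exact hvne hvmem
      have hkerpos : 0 < finrank ℝ (LinearMap.ker M.mulVecLin) :=
        Nat.pos_of_ne_zero (fun h0 => hkerne (Submodule.finrank_eq_zero.mp h0))
      have hrdef : M.rank = finrank ℝ (LinearMap.range M.mulVecLin) := rfl
      have h3 : finrank ℝ (LinearMap.range M.mulVecLin)
          + finrank ℝ (LinearMap.ker M.mulVecLin) = 3 := by simpa using hrn
      omega
    have hrank_ge : 2 ≤ M.rank := by
      set F : Matrix (Fin 2) (Fin 3) ℝ := !![1,0,0;0,1,0] with hF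
      have hM2 : F * M * Fᵀ = !![M 0 0, M 0 1; M 1 0, M 1 1] := by
        ext i j
        fin_cases i <;> fin_cases j <;>
          simp [hF, Matrix.mul_apply, Matrix.vecMul, dotProduct, Fin.sum_univ_three,
            Matrix.vecHead, Matrix.vecTail, Matrix.transpose_apply]
      have hd2 : (!![M 0 0, M 0 1; M 1 0, M 1 1]).det
          = (G.det)⁻¹^2 * ((2*G 1 2*G 1 3*G 2 3)*(2*G 0 2*G 0 3*G 2 3) - (G 0 1*G 2 3^2 - G 0 3*G 1 2*G 2 3 - G 0 2*G 1 3*G 2 3)^2) := by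
        rw [Matrix.det_fin_two_of, hm00, hm01, hm10, hm11]
        ring
      have hd2pos : 0 < (!![M 0 0, M 0 1; M 1 0, M 1 1]).det := by
        rw [hd2]
        exact mul_pos (pow_two_pos_of_ne_zero (inv_ne_zero hdet0)) hdisc
      have hunit : IsUnit (!![M 0 0, M 0 1; M 1 0, M 1 1]) :=
        (Matrix.isUnit_iff_isUnit_det _).mpr (isUnit_iff_ne_zero.mpr (ne_of_gt hd2pos))
      have hr2 : (!![M 0 0, M 0 1; M 1 0, M 1 1]).rank = 2 := by
        rw [Matrix.rank_of_isUnit _ hunit]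
        simp
      calc 2 = (!![M 0 0, M 0 1; M 1 0, M 1 1]).rank := hr2.symm
        _ = (F * M * Fᵀ).rank := by rw [hM2]
        _ ≤ (F * M).rank := Matrix.rank_mul_le_left _ _
        _ ≤ M.rank := Matrix.rank_mul_le_right _ _
    omega

private lemma transfer (G : Matrix (Fin 4) (Fin 4) ℝ)
    (hsymm : G.IsSymm) (hdiag : ∀ i, G i i = 0)
    (hpos : ∀ i j, i ≠ j → 0 < G i j) (hdet : G.det < 0)
    (A B C D : Fin 4) (hbij : Function.Bijective ![A, B, C, D]) :
      (G⁻¹.submatrix ![A, B, C] ![A, B, C]).NegSemidefR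
      ∧ (G⁻¹.submatrix ![A, B, C] ![A, B, C]).det = 0
      ∧ (G⁻¹.submatrix ![A, B, C] ![A, B, C]).rank = 2 := by
  set σ : Fin 4 ≃ Fin 4 := Equiv.ofBijective _ hbij with hσ
  have hσ0 : σ 0 = A := rfl
  have hσ1 : σ 1 = B := rfl
  have hσ2 : σ 2 = C := rfl
  have hG' : (G.submatrix σ σ).IsSymm := hsymm.submatrix _
  have hdiag' : ∀ i, (G.submatrix σ σ) i i = 0 := fun i => hdiag (σ i)
  have hpos' : ∀ i j, i ≠ j → 0 < (G.submatrix σ σ) i j := fun i j hij =>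
    hpos (σ i) (σ j) (fun h => hij (σ.injective h))
  have hdet' : (G.submatrix σ σ).det < 0 := by
    rwa [Matrix.det_submatrix_equiv_self]
  obtain ⟨h1, h2, h3⟩ := canonical (G.submatrix σ σ) hG' hdiag' hpos' hdet'
  have hkey : (G.submatrix σ σ)⁻¹.submatrix ![0, 1, 2] ![0, 1, 2]
      = G⁻¹.submatrix ![A, B, C] ![A, B, C] := by
    have hcomp : (⇑σ ∘ ![0, 1, 2] : Fin 3 → Fin 4) = ![A, B, C] := by
      funext i
      fin_cases i <;> simp [hσ0, hσ1, hσ2]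
    rw [Matrix.inv_submatrix_equiv, Matrix.submatrix_submatrix, hcomp]
  rw [hkey] at h1 h2 h3
  exact ⟨h1, h2, h3⟩

/-- If `G` is a real symmetric 4×4 matrix in emission form with
`det G < 0` and `K = G⁻¹`, then for every triple of distinct indices `A, B, C` the 3×3
principal submatrix of `K` on rows and columns `{A, B, C}` is negative semidefinite,
has determinant zero, and has rank 2: each 3-space spanned by a triad of natural
vectors is null. -/
theorem stmt_8 (G : Matrix (Fin 4) (Fin 4) ℝ)
    (hsymm : G.IsSymm) (hdiag : ∀ i, G i i = 0)
    (hpos : ∀ i j, i ≠ j → 0 < G i j) (hdet : G.det < 0) :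
    ∀ A B C : Fin 4, A ≠ B → A ≠ C → B ≠ C →
      (G⁻¹.submatrix ![A, B, C] ![A, B, C]).NegSemidefR
      ∧ (G⁻¹.submatrix ![A, B, C] ![A, B, C]).det = 0
      ∧ (G⁻¹.submatrix ![A, B, C] ![A, B, C]).rank = 2 := by
  intro A B C hAB hAC hBC
  fin_cases A <;> fin_cases B <;> fin_cases C <;>
    first
    | exact absurd rfl hAB
    | exact absurd rfl hAC
    | exact absurd rfl hBC
    | exact transfer G hsymm hdiag hpos hdet _ _ _ 0 (by decide)
    | exact transfer G hsymm hdiag hpos hdet _ _ _ 1 (by decide)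
    | exact transfer G hsymm hdiag hpos hdet _ _ _ 2 (by decide)
    | exact transfer G hsymm hdiag hpos hdet _ _ _ 3 (by decide)
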